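/- If f,g : [a,b] → [0,∞) are convex, then (1/(b-a))∫_a^b f(x)g(x) dx ≤ (1/3)[f(a)g(a)+f(b)g(b)] + (1/6)[f(a)g(b)+f(b)g(a)]. (Pachpatte's inequality.) -/

import Mathlib

open MeasureTheory

lemma quad_integral (a b A B C : ℝ) :
    (∫ x in a..b, (A*(b-x)^2 + B*(x-a)^2 + C*((b-x)*(x-a)))) =
    (b-a)^3*(A/3 + B/3 + C/6) := by
  have h : ∀ x ∈ Set.uIcc a b, HasDerivAt
      (fun x : ℝ => (A+B-C)/3*x^3 + (-2*b*A - 2*a*B + (a+b)*C)/2*x^2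
        + (A*b^2 + B*a^2 - C*a*b)*x)
      (A*(b-x)^2 + B*(x-a)^2 + C*((b-x)*(x-a))) x := by
    intro x _
    have h1 := (((hasDerivAt_pow 3 x).const_mul ((A+B-C)/3)).add
      ((hasDerivAt_pow 2 x).const_mul ((-2*b*A - 2*a*B + (a+b)*C)/2))).add
      ((hasDerivAt_id x).const_mul (A*b^2 + B*a^2 - C*a*b))
    convert h1 using 1 <;> try rfl
    push_cast
    ring
  rw [intervalIntegral.integral_eq_sub_of_hasDerivAt h
    (Continuous.intervalIntegrable (by continuity) a b)]
  ring

theorem pachpatte_inequality (f g : ℝ → ℝ) (a b : ℝ) (hab : a < b)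
    (hf : ∀ x ∈ Set.Icc a b, 0 ≤ f x)
    (hg : ∀ x ∈ Set.Icc a b, 0 ≤ g x)
    (hconvf : ConvexOn ℝ (Set.Icc a b) f)
    (hconvg : ConvexOn ℝ (Set.Icc a b) g)
    (hfgint : IntegrableOn (fun x => f x * g x) (Set.Icc a b)) :
    (1 / (b - a)) * ∫ x in a..b, f x * g x ≤
      (1 / 3) * (f a * g a + f b * g b) + (1 / 6) * (f a * g b + f b * g a) := by
  have hL : 0 < b - a := sub_pos.mpr hab
  have hfa : 0 ≤ f a := hf a (Set.left_mem_Icc.mpr hab.le)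
  have hfb : 0 ≤ f b := hf b (Set.right_mem_Icc.mpr hab.le)
  have hga : 0 ≤ g a := hg a (Set.left_mem_Icc.mpr hab.le)
  have hgb : 0 ≤ g b := hg b (Set.right_mem_Icc.mpr hab.le)
  set P : ℝ → ℝ := fun x =>
    (f a*g a*(b-x)^2 + f b*g b*(x-a)^2 + (f a*g b + f b*g a)*((b-x)*(x-a)))/(b-a)^2
    with hP
  have hbound : ∀ x ∈ Set.Icc a b, f x * g x ≤ P x := by
    intro x hx
    obtain ⟨hax, hxb⟩ := hx
    have hs : 0 ≤ (b-x)/(b-a) := div_nonneg (by linarith) hL.le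
    have ht : 0 ≤ (x-a)/(b-a) := div_nonneg (by linarith) hL.le
    have hst : (b-x)/(b-a) + (x-a)/(b-a) = 1 := by
      field_simp; ring
    have hxeq : ((b-x)/(b-a)) * a + ((x-a)/(b-a)) * b = x := by
      field_simp; ring
    have hfx : f x ≤ ((b-x)/(b-a)) * f a + ((x-a)/(b-a)) * f b := by
      have := hconvf.2 (Set.left_mem_Icc.mpr hab.le) (Set.right_mem_Icc.mpr hab.le)
        hs ht hst
      simpa [smul_eq_mul, hxeq] using this
    have hgx : g x ≤ ((b-x)/(b-a)) * g a + ((x-a)/(b-a)) * g b := by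
      have := hconvg.2 (Set.left_mem_Icc.mpr hab.le) (Set.right_mem_Icc.mpr hab.le)
        hs ht hst
      simpa [smul_eq_mul, hxeq] using this
    have h1 : f x * g x ≤
        (((b-x)/(b-a)) * f a + ((x-a)/(b-a)) * f b) *
        (((b-x)/(b-a)) * g a + ((x-a)/(b-a)) * g b) :=
      mul_le_mul hfx hgx (hg x ⟨hax, hxb⟩)
        (add_nonneg (mul_nonneg hs hfa) (mul_nonneg ht hfb))
    calc f x * g x ≤ _ := h1
      _ = P x := by rw [hP]; field_simp; ring
  have hcont : Continuous P := by rw [hP]; fun_prop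
  have hint_h : IntervalIntegrable P volume a b := hcont.intervalIntegrable a b
  have hint_fg : IntervalIntegrable (fun x => f x * g x) volume a b := by
    rw [← Set.uIcc_of_le hab.le] at hfgint
    exact hfgint.intervalIntegrable
  have hmono := intervalIntegral.integral_mono_on hab.le hint_fg hint_h hbound
  have hval : (∫ x in a..b, P x) =
      (b-a) * ((f a*g a)/3 + (f b*g b)/3 + (f a*g b + f b*g a)/6) := by
    have hq := quad_integral a b (f a*g a) (f b*g b) (f a*g b + f b*g a)
    simp only [hP, div_eq_mul_inv]
    rw [intervalIntegral.integral_mul_const, ← div_eq_mul_inv] at *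
    rw [hq]
    field_simp
  rw [hval] at hmono
  have hfin := mul_le_mul_of_nonneg_left hmono (le_of_lt (one_div_pos.mpr hL))
  calc (1 / (b - a)) * ∫ x in a..b, f x * g x ≤ _ := hfin
    _ = (1 / 3) * (f a * g a + f b * g b) + (1 / 6) * (f a * g b + f b * g a) := by
      field_simp
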